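/- Suppose F_1 ∈ R[x_2] and F_2 ∈ R[x_1] are irreducible polynomials in R[x_1,x_2], each with nonzero constant term (equivalently, not divisible by any variable), and set x'_1 = F_1/x_1 and x'_2 = F_2/x_2 in 𝔽 (this encodes the hypothesis F̂_j = F_j for j ∈ {1,2}). Then R[x_1, x_2^{±1}] ∩ R[x_1^{±1}, x_2, x'_2] = R[x_1, x_2, x'_2] as R-subalgebras of 𝔽. -/

import Mathlib

open MvPolynomial

/-- The ambient field `𝔽 = Frac(R[x_1, x_2])`. -/
noncomputable abbrev AmbientField (R : Type*) [CommRing R] [IsDomain R] :=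
  FractionRing (MvPolynomial (Fin 2) R)

/-- The cluster variable `x_i` viewed inside the ambient field. -/
noncomputable def xv (R : Type*) [CommRing R] [IsDomain R] (i : Fin 2) : AmbientField R :=
  algebraMap (MvPolynomial (Fin 2) R) (AmbientField R) (MvPolynomial.X i)

/-- The canonical embedding of polynomials into the ambient field. -/
noncomputable def toAmbient (R : Type*) [CommRing R] [IsDomain R]
    (F : MvPolynomial (Fin 2) R) : AmbientField R :=
  algebraMap (MvPolynomial (Fin 2) R) (AmbientField R) F

namespace Statement3Aux

/-! ### Generic lemmas about polynomial coefficients and span powers -/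

/-- The ideal of polynomials whose `j`-th coefficient is divisible by `g^(N-j)` for all `j < N`. -/
def Tideal {S : Type*} [CommRing S] (g : S) (N : ℕ) : Ideal (Polynomial S) where
  carrier := { q | ∀ j < N, g ^ (N - j) ∣ q.coeff j }
  add_mem' := fun {a b} ha hb j hj => by
    rw [Polynomial.coeff_add]; exact dvd_add (ha j hj) (hb j hj)
  zero_mem' := fun j hj => by simp
  smul_mem' := fun c q hq j hj => by
    rw [smul_eq_mul, Polynomial.coeff_mul]
    refine Finset.dvd_sum fun ab hab => Dvd.dvd.mul_left ?_ _
    rw [Finset.HasAntidiagonal.mem_antidiagonal] at hab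
    exact dvd_trans (pow_dvd_pow g (by omega)) (hq ab.2 (by omega))

theorem mem_Tideal_iff {S : Type*} [CommRing S] {g : S} {N : ℕ} {q : Polynomial S} :
    q ∈ Tideal g N ↔ ∀ j < N, g ^ (N - j) ∣ q.coeff j := Iff.rfl

theorem pow_span_le_T {S : Type*} [CommRing S] (g : S) :
    ∀ N : ℕ, (Ideal.span {Polynomial.X, Polynomial.C g}) ^ N ≤ Tideal g N := by
  intro N
  induction N with
  | zero => intro q _ j hj; omega
  | succ N ih =>
    rw [pow_succ, Ideal.mul_le]
    intro r hr s hs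
    have hrT : ∀ j < N, g ^ (N - j) ∣ r.coeff j := ih hr
    rw [Ideal.mem_span_pair] at hs
    obtain ⟨a, b, rfl⟩ := hs
    have hX : Polynomial.X * r ∈ Tideal g (N + 1) := by
      intro j hj
      cases j with
      | zero => simp [Polynomial.mul_coeff_zero]
      | succ i =>
        rw [Polynomial.coeff_X_mul]
        have hni : N + 1 - (i + 1) = N - i := by omega
        rw [hni]
        exact hrT i (by omega)
    have hC : Polynomial.C g * r ∈ Tideal g (N + 1) := by
      intro j hj
      rw [Polynomial.coeff_C_mul]
      rcases Nat.lt_or_ge j N with hjN | hjN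
      · have : N + 1 - j = (N - j) + 1 := by omega
        rw [this, pow_succ]
        rw [mul_comm g (r.coeff j)]
        exact mul_dvd_mul (hrT j hjN) dvd_rfl
      · have h1 : N + 1 - j = 1 := by omega
        rw [h1, pow_one]
        exact dvd_mul_right g _
    have : r * (a * Polynomial.X + b * Polynomial.C g)
        = a * (Polynomial.X * r) + b * (Polynomial.C g * r) := by ring
    rw [this]
    exact add_mem (Ideal.mul_mem_left _ a hX) (Ideal.mul_mem_left _ b hC)

theorem mem_pow_span_of_dvd {S : Type*} [CommRing S] (g : S) (N : ℕ) (q : Polynomial S)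
    (h : ∀ j < N, g ^ (N - j) ∣ q.coeff j) :
    q ∈ (Ideal.span {Polynomial.X, Polynomial.C g}) ^ N := by
  set J := Ideal.span ({Polynomial.X, Polynomial.C g} : Set (Polynomial S)) with hJ
  have hXJ : (Polynomial.X : Polynomial S) ∈ J := Ideal.subset_span (by simp)
  have hCJ : (Polynomial.C g : Polynomial S) ∈ J := Ideal.subset_span (by simp)
  set s : Polynomial S := ∑ j ∈ Finset.range N, Polynomial.C (q.coeff j) * Polynomial.X ^ j
    with hsdef
  have hs : s ∈ J ^ N := by
    refine Submodule.sum_mem _ fun j hj => ?_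
    rw [Finset.mem_range] at hj
    obtain ⟨h', hh'⟩ := h j (by omega)
    have hmem : (Polynomial.C g) ^ (N - j) * Polynomial.X ^ j ∈ J ^ N := by
      have := Ideal.mul_mem_mul (Ideal.pow_mem_pow hCJ (N - j)) (Ideal.pow_mem_pow hXJ j)
      rw [← pow_add] at this
      have hNj : N - j + j = N := by omega
      rwa [hNj] at this
    have : Polynomial.C (q.coeff j) * Polynomial.X ^ j
        = Polynomial.C h' * ((Polynomial.C g) ^ (N - j) * Polynomial.X ^ j) := by
      rw [hh', map_mul, map_pow]; ring
    rw [this]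
    exact Ideal.mul_mem_left _ _ hmem
  have hdvd : (Polynomial.X : Polynomial S) ^ N ∣ q - s := by
    rw [Polynomial.X_pow_dvd_iff]
    intro d hd
    rw [Polynomial.coeff_sub]
    have : s.coeff d = q.coeff d := by
      rw [hsdef, Polynomial.finset_sum_coeff]
      have : ∀ j ∈ Finset.range N,
          (Polynomial.C (q.coeff j) * Polynomial.X ^ j).coeff d
            = if j = d then q.coeff j else 0 := by
        intro j _
        rw [Polynomial.coeff_C_mul, Polynomial.coeff_X_pow]
        by_cases hjd : j = d
        · subst hjd; simp
        · rw [if_neg fun h => hjd h.symm, mul_zero, if_neg hjd]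
      rw [Finset.sum_congr rfl this, Finset.sum_ite_eq' (Finset.range N) d]
      simp [Finset.mem_range.mpr hd]
    rw [this, sub_self]
  obtain ⟨r, hr⟩ := hdvd
  have : q = s + Polynomial.X ^ N * r := by rw [← hr]; ring
  rw [this]
  exact add_mem hs (Ideal.mul_mem_right _ _ (Ideal.pow_mem_pow hXJ N))

theorem irreducible_of_C_irreducible {S : Type*} [CommRing S] [IsDomain S] {g : S}
    (h : Irreducible (Polynomial.C g)) : Irreducible g := by
  constructor
  · exact fun hg => h.not_isUnit (Polynomial.isUnit_C.mpr hg)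
  · intro a b hab
    rcases h.isUnit_or_isUnit (by rw [hab, map_mul]) with h' | h'
    · exact Or.inl (Polynomial.isUnit_C.mp h')
    · exact Or.inr (Polynomial.isUnit_C.mp h')

/-! ### The variable-splitting equivalence -/

/-- The algebra equivalence `R[x₀,x₁] ≃ (R[x₀])[X]` extracting the variable `x₁`. -/
noncomputable def E (R : Type*) [CommRing R] :
    MvPolynomial (Fin 2) R ≃ₐ[R] Polynomial (MvPolynomial (Fin 1) R) :=
  (renameEquiv R (Equiv.swap 0 1)).trans (MvPolynomial.finSuccEquiv R 1)

variable {R : Type*} [CommRing R]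

theorem E_X1 : E R (X 1) = Polynomial.X := by
  rw [E, AlgEquiv.trans_apply, renameEquiv_apply, rename_X, Equiv.swap_apply_right,
    finSuccEquiv_X_zero]

theorem E_X0 : E R (X 0) = Polynomial.C (X 0) := by
  rw [E, AlgEquiv.trans_apply, renameEquiv_apply, rename_X, Equiv.swap_apply_left]
  have h : (1 : Fin 2) = Fin.succ 0 := rfl
  rw [h, finSuccEquiv_X_succ]

theorem E_apply (p : MvPolynomial (Fin 2) R) :
    E R p = MvPolynomial.finSuccEquiv R 1 (rename (Equiv.swap 0 1) p) := rfl

theorem E_eq_C {F : MvPolynomial (Fin 2) R} (hF : ∀ m ∈ F.support, m 1 = 0) :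
    E R F = Polynomial.C ((E R F).coeff 0) := by
  classical
  apply Polynomial.eq_C_of_natDegree_le_zero
  rw [Polynomial.natDegree_le_iff_coeff_eq_zero]
  intro i hi
  apply MvPolynomial.eq_zero_iff.mpr
  intro m
  rw [E_apply, finSuccEquiv_coeff_coeff]
  apply MvPolynomial.notMem_support_iff.mp
  intro hmem
  rw [support_rename_of_injective (Equiv.swap 0 1).injective] at hmem
  rw [Finset.mem_image] at hmem
  obtain ⟨m₀, hm₀, hm₀eq⟩ := hmem
  have h2 : (Finsupp.mapDomain (⇑(Equiv.swap 0 1) : Fin 2 → Fin 2) m₀) ((Equiv.swap 0 1) 1)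
      = m₀ 1 := Finsupp.mapDomain_apply (Equiv.swap 0 1).injective m₀ 1
  rw [Equiv.swap_apply_right, hm₀eq, Finsupp.cons_zero, hF m₀ hm₀] at h2
  omega

theorem E_constantCoeff (F : MvPolynomial (Fin 2) R) :
    constantCoeff ((E R F).coeff 0) = constantCoeff F := by
  have h1 : coeff (0 : Fin 1 →₀ ℕ) ((E R F).coeff 0)
      = coeff (Finsupp.cons 0 (0 : Fin 1 →₀ ℕ)) (rename (Equiv.swap 0 1) F) := by
    rw [E_apply, finSuccEquiv_coeff_coeff]
  rw [Finsupp.cons_zero_zero] at h1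
  have h2 : constantCoeff (rename (⇑(Equiv.swap 0 1)) F) = constantCoeff F :=
    constantCoeff_rename _ F
  rw [show constantCoeff ((E R F).coeff 0) = coeff (0 : Fin 1 →₀ ℕ) ((E R F).coeff 0) from rfl,
    h1, show coeff (0 : Fin 2 →₀ ℕ) (rename (⇑(Equiv.swap 0 1)) F)
        = constantCoeff (rename (⇑(Equiv.swap 0 1)) F) from rfl, h2]

theorem X_dvd_of_constantCoeff_eq_zero [IsDomain R] {h : MvPolynomial (Fin 1) R}
    (hh : constantCoeff h = 0) : (X 0 : MvPolynomial (Fin 1) R) ∣ h := by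
  classical
  rw [← support_sum_monomial_coeff h]
  refine Finset.dvd_sum fun m hm => ?_
  refine X_dvd_monomial.mpr (Or.inr ?_)
  intro hm0
  have hmz : m = 0 := by
    apply Finsupp.ext
    intro i
    rw [Subsingleton.elim i (0 : Fin 1), hm0]; rfl
  rw [hmz] at hm
  exact (MvPolynomial.mem_support_iff.mp hm) hh

theorem not_dvd_X0 [IsDomain R] {g : MvPolynomial (Fin 1) R}
    (hirr : Irreducible g) (hc : constantCoeff g ≠ 0) :
    ¬ g ∣ (X 0 : MvPolynomial (Fin 1) R) := by
  rintro ⟨h, hh⟩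
  have h0 : constantCoeff (X 0 : MvPolynomial (Fin 1) R) = 0 := constantCoeff_X R 0
  rw [hh, map_mul] at h0
  have hch : constantCoeff h = 0 := by
    rcases mul_eq_zero.mp h0 with h' | h'
    · exact absurd h' hc
    · exact h'
  obtain ⟨h', rfl⟩ := X_dvd_of_constantCoeff_eq_zero hch
  have hX0 : (X 0 : MvPolynomial (Fin 1) R) ≠ 0 := MvPolynomial.X_ne_zero 0
  have hone : (X 0 : MvPolynomial (Fin 1) R) * 1 = X 0 * (g * h') := by
    rw [mul_one]; linear_combination hh
  have : (1 : MvPolynomial (Fin 1) R) = g * h' := mul_left_cancel₀ hX0 hone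
  exact hirr.not_isUnit (IsUnit.of_mul_eq_one _ this.symm)

/-! ### Saturation of powers of the ideal `(x₁, F)` with respect to `x₀` -/

theorem sat [IsDomain R] [UniqueFactorizationMonoid R]
    {F : MvPolynomial (Fin 2) R} (hFx : ∀ m ∈ F.support, m 1 = 0)
    (hFirr : Irreducible F) (hFc : MvPolynomial.coeff 0 F ≠ 0)
    (N : ℕ) (p : MvPolynomial (Fin 2) R)
    (h : X 0 * p ∈ (Ideal.span {X 1, F} : Ideal (MvPolynomial (Fin 2) R)) ^ N) :
    p ∈ (Ideal.span {X 1, F} : Ideal (MvPolynomial (Fin 2) R)) ^ N := by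
  classical
  set g : MvPolynomial (Fin 1) R := (E R F).coeff 0 with hg
  have hEF : E R F = Polynomial.C g := E_eq_C hFx
  have hgc : constantCoeff g ≠ 0 := by
    rw [hg, E_constantCoeff]
    exact hFc
  have hgirr : Irreducible g := by
    apply irreducible_of_C_irreducible (g := g)
    rw [← hEF]
    exact (MulEquiv.irreducible_iff (E R)).mpr hFirr
  have hgprime : Prime g := UniqueFactorizationMonoid.irreducible_iff_prime.mp hgirr
  have hnd : ¬ g ∣ (X 0 : MvPolynomial (Fin 1) R) := not_dvd_X0 hgirr hgc
  set f : MvPolynomial (Fin 2) R →+* Polynomial (MvPolynomial (Fin 1) R) :=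
    (E R : MvPolynomial (Fin 2) R ≃+* Polynomial (MvPolynomial (Fin 1) R)).toRingHom with hf
  have hfapp : ∀ x, f x = E R x := fun x => rfl
  have hfsurj : Function.Surjective f := (E R : MvPolynomial (Fin 2) R ≃+*
    Polynomial (MvPolynomial (Fin 1) R)).surjective
  have hfinj : Function.Injective f := (E R : MvPolynomial (Fin 2) R ≃+*
    Polynomial (MvPolynomial (Fin 1) R)).injective
  have hmapJ : Ideal.map f (Ideal.span {X 1, F})
      = Ideal.span {Polynomial.X, Polynomial.C g} := by
    rw [Ideal.map_span, Set.image_insert_eq, Set.image_singleton, hfapp, hfapp, E_X1, hEF]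
  have hmem : ∀ x : MvPolynomial (Fin 2) R,
      x ∈ (Ideal.span {X 1, F} : Ideal (MvPolynomial (Fin 2) R)) ^ N
        ↔ f x ∈ (Ideal.span {Polynomial.X, Polynomial.C g}) ^ N := by
    intro x
    rw [← hmapJ, ← Ideal.map_pow]
    constructor
    · exact fun hx => Ideal.mem_map_of_mem f hx
    · intro hx
      obtain ⟨x', hx', hxx⟩ := (Ideal.mem_map_iff_of_surjective f hfsurj).mp hx
      rwa [← hfinj hxx]
  rw [hmem]
  apply mem_pow_span_of_dvd
  intro j hj
  have h1 := pow_span_le_T g N ((hmem _).mp h) j hj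
  rw [map_mul, hfapp, E_X0, Polynomial.coeff_C_mul] at h1
  exact hgprime.pow_dvd_of_dvd_mul_left _ hnd h1

theorem satk [IsDomain R] [UniqueFactorizationMonoid R]
    {F : MvPolynomial (Fin 2) R} (hFx : ∀ m ∈ F.support, m 1 = 0)
    (hFirr : Irreducible F) (hFc : MvPolynomial.coeff 0 F ≠ 0)
    (N k : ℕ) (p : MvPolynomial (Fin 2) R)
    (h : X 0 ^ k * p ∈ (Ideal.span {X 1, F} : Ideal (MvPolynomial (Fin 2) R)) ^ N) :
    p ∈ (Ideal.span {X 1, F} : Ideal (MvPolynomial (Fin 2) R)) ^ N := by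
  induction k generalizing p with
  | zero => simpa using h
  | succ k ih =>
    have : X 0 ^ k * (X 0 * p) ∈ (Ideal.span {X 1, F} :
        Ideal (MvPolynomial (Fin 2) R)) ^ N := by
      rw [show X 0 ^ k * (X 0 * p) = X 0 ^ (k + 1) * p by ring]
      exact h
    exact sat hFx hFirr hFc N p (ih _ this)


/-! ### Adjoin lemmas in the ambient field -/

theorem mem_adjoin_of_inv {R K : Type*} [CommRing R] [Field K] [Algebra R K]
    (u : K) (s : Set K) (hu : u ∈ s) (hu0 : u ≠ 0) {y : K}
    (hy : y ∈ Algebra.adjoin R (insert u⁻¹ s)) :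
    ∃ k : ℕ, u ^ k * y ∈ Algebra.adjoin R s := by
  induction hy using Algebra.adjoin_induction with
  | mem x hx =>
    rcases Set.mem_insert_iff.mp hx with rfl | hx
    · exact ⟨1, by rw [pow_one, mul_inv_cancel₀ hu0]; exact one_mem _⟩
    · exact ⟨0, by rw [pow_zero, one_mul]; exact Algebra.subset_adjoin hx⟩
  | algebraMap r =>
    exact ⟨0, by rw [pow_zero, one_mul]; exact Subalgebra.algebraMap_mem _ r⟩
  | add x y' hx hy' ihx ihy =>
    obtain ⟨k₁, h₁⟩ := ihx
    obtain ⟨k₂, h₂⟩ := ihy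
    refine ⟨k₁ + k₂, ?_⟩
    have he : u ^ (k₁ + k₂) * (x + y') = u ^ k₂ * (u ^ k₁ * x) + u ^ k₁ * (u ^ k₂ * y') := by
      ring
    rw [he]
    have humem : u ∈ Algebra.adjoin R s := Algebra.subset_adjoin hu
    exact add_mem (mul_mem (pow_mem humem _) h₁) (mul_mem (pow_mem humem _) h₂)
  | mul x y' hx hy' ihx ihy =>
    obtain ⟨k₁, h₁⟩ := ihx
    obtain ⟨k₂, h₂⟩ := ihy
    refine ⟨k₁ + k₂, ?_⟩
    have he : u ^ (k₁ + k₂) * (x * y') = (u ^ k₁ * x) * (u ^ k₂ * y') := by ring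
    rw [he]
    exact mul_mem h₁ h₂

section AmbientLemmas

variable {R : Type*} [CommRing R] [IsDomain R]

theorem toAmbient_add (p q : MvPolynomial (Fin 2) R) :
    toAmbient R (p + q) = toAmbient R p + toAmbient R q := map_add _ _ _

theorem toAmbient_mul (p q : MvPolynomial (Fin 2) R) :
    toAmbient R (p * q) = toAmbient R p * toAmbient R q := map_mul _ _ _

theorem toAmbient_pow (p : MvPolynomial (Fin 2) R) (n : ℕ) :
    toAmbient R (p ^ n) = toAmbient R p ^ n := map_pow _ _ _

theorem toAmbient_X (i : Fin 2) : toAmbient R (X i) = xv R i := rfl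

theorem adjoin_uv :
    Algebra.adjoin R ({xv R 0, xv R 1} : Set (AmbientField R)) =
      Subalgebra.map (IsScalarTower.toAlgHom R (MvPolynomial (Fin 2) R) (AmbientField R)) ⊤ := by
  have h1 : (⊤ : Subalgebra R (MvPolynomial (Fin 2) R))
      = Algebra.adjoin R (Set.range (X : Fin 2 → MvPolynomial (Fin 2) R)) :=
    (MvPolynomial.adjoin_range_X).symm
  rw [h1, AlgHom.map_adjoin]
  congr 1
  rw [← Set.range_comp]
  ext z
  constructor
  · rintro (rfl | rfl)
    · exact ⟨0, rfl⟩
    · exact ⟨1, rfl⟩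
  · rintro ⟨i, rfl⟩
    fin_cases i
    · exact Set.mem_insert _ _
    · exact Set.mem_insert_of_mem _ rfl

theorem toAmbient_mem_adjoin_uv (p : MvPolynomial (Fin 2) R) :
    toAmbient R p ∈ Algebra.adjoin R ({xv R 0, xv R 1} : Set (AmbientField R)) := by
  rw [adjoin_uv]
  exact ⟨p, trivial, rfl⟩

theorem eq_toAmbient_of_mem_adjoin_uv {z : AmbientField R}
    (hz : z ∈ Algebra.adjoin R ({xv R 0, xv R 1} : Set (AmbientField R))) :
    ∃ p : MvPolynomial (Fin 2) R, toAmbient R p = z := by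
  rw [adjoin_uv] at hz
  obtain ⟨p, -, hp⟩ := hz
  exact ⟨p, hp⟩

theorem into_J (F : MvPolynomial (Fin 2) R) (w : AmbientField R)
    (hw : xv R 1 * w = toAmbient R F) {y : AmbientField R}
    (hy : y ∈ Algebra.adjoin R ({xv R 0, xv R 1, w} : Set (AmbientField R))) :
    ∃ (N : ℕ) (q : MvPolynomial (Fin 2) R),
      q ∈ (Ideal.span {X 1, F} : Ideal (MvPolynomial (Fin 2) R)) ^ N ∧
      (xv R 1) ^ N * y = toAmbient R q := by
  have hX1J : (X 1 : MvPolynomial (Fin 2) R) ∈ Ideal.span {X 1, F} :=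
    Ideal.subset_span (Set.mem_insert _ _)
  induction hy using Algebra.adjoin_induction with
  | mem x hx =>
    simp only [Set.mem_insert_iff, Set.mem_singleton_iff] at hx
    rcases hx with rfl | rfl | rfl
    · exact ⟨0, X 0, by simp [Ideal.one_eq_top], by rw [pow_zero, one_mul]; rfl⟩
    · exact ⟨0, X 1, by simp [Ideal.one_eq_top], by rw [pow_zero, one_mul]; rfl⟩
    · refine ⟨1, F, by rw [pow_one]; exact Ideal.subset_span (Set.mem_insert_of_mem _ rfl), ?_⟩
      rw [pow_one]; exact hw
  | algebraMap r =>
    refine ⟨0, C r, by simp [Ideal.one_eq_top], ?_⟩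
    rw [pow_zero, one_mul, toAmbient, show (C r : MvPolynomial (Fin 2) R)
      = algebraMap R (MvPolynomial (Fin 2) R) r from rfl,
      ← IsScalarTower.algebraMap_apply]
  | add x y' hx hy' ihx ihy =>
    obtain ⟨N₁, q₁, hq₁, he₁⟩ := ihx
    obtain ⟨N₂, q₂, hq₂, he₂⟩ := ihy
    refine ⟨N₁ + N₂, X 1 ^ N₂ * q₁ + X 1 ^ N₁ * q₂, ?_, ?_⟩
    · apply add_mem
      · have := Ideal.mul_mem_mul (Ideal.pow_mem_pow hX1J N₂) hq₁
        rw [← pow_add, add_comm N₂ N₁] at this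
        exact this
      · have := Ideal.mul_mem_mul (Ideal.pow_mem_pow hX1J N₁) hq₂
        rw [← pow_add] at this
        exact this
    · rw [toAmbient_add, toAmbient_mul, toAmbient_mul, toAmbient_pow, toAmbient_pow,
        toAmbient_X]
      linear_combination (xv R 1) ^ N₂ * he₁ + (xv R 1) ^ N₁ * he₂
  | mul x y' hx hy' ihx ihy =>
    obtain ⟨N₁, q₁, hq₁, he₁⟩ := ihx
    obtain ⟨N₂, q₂, hq₂, he₂⟩ := ihy
    refine ⟨N₁ + N₂, q₁ * q₂, ?_, ?_⟩
    · have := Ideal.mul_mem_mul hq₁ hq₂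
      rw [← pow_add] at this
      exact this
    · rw [toAmbient_mul]
      linear_combination ((xv R 1) ^ N₂ * y') * he₁ + toAmbient R q₁ * he₂

theorem from_J (F : MvPolynomial (Fin 2) R) (w : AmbientField R)
    (hw : xv R 1 * w = toAmbient R F) (hv0 : xv R 1 ≠ 0) :
    ∀ (N : ℕ) (q : MvPolynomial (Fin 2) R),
      q ∈ (Ideal.span {X 1, F} : Ideal (MvPolynomial (Fin 2) R)) ^ N →
      toAmbient R q * ((xv R 1)⁻¹) ^ N ∈
        Algebra.adjoin R ({xv R 0, xv R 1, w} : Set (AmbientField R)) := by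
  have hsub : Algebra.adjoin R ({xv R 0, xv R 1} : Set (AmbientField R)) ≤
      Algebra.adjoin R ({xv R 0, xv R 1, w} : Set (AmbientField R)) :=
    Algebra.adjoin_mono (by intro z hz; simp only [Set.mem_insert_iff,
      Set.mem_singleton_iff] at hz ⊢; tauto)
  intro N
  induction N with
  | zero =>
    intro q _
    rw [pow_zero, mul_one]
    exact hsub (toAmbient_mem_adjoin_uv q)
  | succ N ih =>
    intro q hq
    rw [pow_succ] at hq
    refine Submodule.mul_induction_on hq ?_ ?_
    · intro a ha b hb
      have h1 := ih a ha
      rw [Ideal.mem_span_pair] at hb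
      obtain ⟨c, d, rfl⟩ := hb
      have hvv : xv R 1 * (xv R 1)⁻¹ = 1 := mul_inv_cancel₀ hv0
      have heq : toAmbient R (a * (c * X 1 + d * F)) * ((xv R 1)⁻¹) ^ (N + 1)
          = (toAmbient R a * ((xv R 1)⁻¹) ^ N) * (toAmbient R c + toAmbient R d * w) := by
        rw [toAmbient_mul, toAmbient_add, toAmbient_mul, toAmbient_mul, toAmbient_X,
          ← hw, pow_succ]
        linear_combination (toAmbient R a * ((xv R 1)⁻¹) ^ N *
          (toAmbient R c + toAmbient R d * w)) * hvv
      rw [heq]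
      refine mul_mem h1 (add_mem (hsub (toAmbient_mem_adjoin_uv c))
        (mul_mem (hsub (toAmbient_mem_adjoin_uv d)) (Algebra.subset_adjoin ?_)))
      simp
    · intro x y hx hy
      rw [toAmbient_add, add_mul]
      exact add_mem hx hy

end AmbientLemmas


end Statement3Aux

open Statement3Aux in
/-- With `F₁ ∈ R[x₂]`, `F₂ ∈ R[x₁]` irreducible with nonzero constant term,
`x₁' = F₁/x₁`, `x₂' = F₂/x₂`, one has
`R[x₁, x₂^{±1}] ∩ R[x₁^{±1}, x₂, x₂'] = R[x₁, x₂, x₂']`. -/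
theorem statement3 {R : Type*} [CommRing R] [IsDomain R] [UniqueFactorizationMonoid R]
    (F₁ F₂ : MvPolynomial (Fin 2) R)
    -- `F₁ ∈ R[x₂]`, i.e. `F₁` does not involve `x₁`
    (hF₁x : ∀ m ∈ F₁.support, m 0 = 0)
    -- `F₂ ∈ R[x₁]`, i.e. `F₂` does not involve `x₂`
    (hF₂x : ∀ m ∈ F₂.support, m 1 = 0)
    (hF₁irr : Irreducible F₁) (hF₂irr : Irreducible F₂)
    -- nonzero constant terms (equivalently, not divisible by any variable)
    (hF₁c : MvPolynomial.coeff 0 F₁ ≠ 0) (hF₂c : MvPolynomial.coeff 0 F₂ ≠ 0)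
    (x₁' x₂' : AmbientField R)
    (hx₁' : x₁' = toAmbient R F₁ / xv R 0)
    (hx₂' : x₂' = toAmbient R F₂ / xv R 1) :
    (Algebra.adjoin R ({xv R 0, xv R 1, (xv R 1)⁻¹} : Set (AmbientField R))) ⊓
      (Algebra.adjoin R ({xv R 0, (xv R 0)⁻¹, xv R 1, x₂'} : Set (AmbientField R))) =
    Algebra.adjoin R ({xv R 0, xv R 1, x₂'} : Set (AmbientField R)) := by
  classical
  have hinj : Function.Injective
      (algebraMap (MvPolynomial (Fin 2) R) (AmbientField R)) := IsFractionRing.injective _ _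
  have hv0 : xv R 1 ≠ 0 := fun h =>
    MvPolynomial.X_ne_zero (R := R) 1 (hinj (by rw [show algebraMap (MvPolynomial (Fin 2) R)
      (AmbientField R) (X 1) = xv R 1 from rfl, h, map_zero]))
  have hu0 : xv R 0 ≠ 0 := fun h =>
    MvPolynomial.X_ne_zero (R := R) 0 (hinj (by rw [show algebraMap (MvPolynomial (Fin 2) R)
      (AmbientField R) (X 0) = xv R 0 from rfl, h, map_zero]))
  have hw : xv R 1 * x₂' = toAmbient R F₂ := by
    rw [hx₂', mul_comm, div_mul_cancel₀ _ hv0]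
  have hX1J : (X 1 : MvPolynomial (Fin 2) R) ∈ Ideal.span {X 1, F₂} :=
    Ideal.subset_span (Set.mem_insert _ _)
  apply le_antisymm
  · rintro y hy
    obtain ⟨hyA, hyB⟩ : y ∈ Algebra.adjoin R ({xv R 0, xv R 1, (xv R 1)⁻¹} :
        Set (AmbientField R)) ∧ y ∈ Algebra.adjoin R ({xv R 0, (xv R 0)⁻¹, xv R 1, x₂'} :
        Set (AmbientField R)) := hy
    -- from membership in `R[x₁, x₂^{±1}]`: a polynomial numerator
    have hsetA : ({xv R 0, xv R 1, (xv R 1)⁻¹} : Set (AmbientField R))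
        = insert (xv R 1)⁻¹ {xv R 0, xv R 1} := by
      ext z
      simp only [Set.mem_insert_iff, Set.mem_singleton_iff]
      tauto
    rw [hsetA] at hyA
    obtain ⟨M, hM⟩ := mem_adjoin_of_inv (xv R 1) {xv R 0, xv R 1}
      (Set.mem_insert_of_mem _ rfl) hv0 hyA
    obtain ⟨p, hp⟩ := eq_toAmbient_of_mem_adjoin_uv hM
    -- from membership in `R[x₁^{±1}, x₂, x₂']`
    have hsetB : ({xv R 0, (xv R 0)⁻¹, xv R 1, x₂'} : Set (AmbientField R))
        = insert (xv R 0)⁻¹ {xv R 0, xv R 1, x₂'} := by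
      ext z
      simp only [Set.mem_insert_iff, Set.mem_singleton_iff]
      tauto
    rw [hsetB] at hyB
    obtain ⟨k, hk⟩ := mem_adjoin_of_inv (xv R 0) {xv R 0, xv R 1, x₂'}
      (Set.mem_insert _ _) hu0 hyB
    obtain ⟨N, q, hqJ, hq⟩ := into_J F₂ x₂' hw hk
    -- the key polynomial identity
    have key : toAmbient R (X 1 ^ M * q) = toAmbient R (X 0 ^ k * (X 1 ^ N * p)) := by
      simp only [toAmbient_mul, toAmbient_pow, toAmbient_X]
      linear_combination (-((xv R 0) ^ k * (xv R 1) ^ N)) * hp - (xv R 1) ^ M * hq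
    have pkey : X 1 ^ M * q = X 0 ^ k * (X 1 ^ N * p) := hinj key
    have h1 : X 1 ^ M * q ∈ (Ideal.span {X 1, F₂} :
        Ideal (MvPolynomial (Fin 2) R)) ^ (N + M) := by
      have := Ideal.mul_mem_mul (Ideal.pow_mem_pow hX1J M) hqJ
      rw [← pow_add, add_comm M N] at this
      exact this
    rw [pkey] at h1
    have h2 := satk hF₂x hF₂irr hF₂c (N + M) k (X 1 ^ N * p) h1
    have h3 := from_J F₂ x₂' hw hv0 (N + M) _ h2
    have hy' : toAmbient R (X 1 ^ N * p) * ((xv R 1)⁻¹) ^ (N + M) = y := by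
      rw [toAmbient_mul, toAmbient_pow, toAmbient_X, hp]
      have hvv : xv R 1 * (xv R 1)⁻¹ = 1 := mul_inv_cancel₀ hv0
      rw [show (xv R 1) ^ N * ((xv R 1) ^ M * y) * ((xv R 1)⁻¹) ^ (N + M)
        = ((xv R 1) * (xv R 1)⁻¹) ^ (N + M) * y from by ring, hvv, one_pow, one_mul]
    rw [← hy']
    exact h3
  · refine le_inf ?_ ?_
    · apply Algebra.adjoin_le
      intro z hz
      simp only [Set.mem_insert_iff, Set.mem_singleton_iff] at hz
      rcases hz with rfl | rfl | rfl
      · exact Algebra.subset_adjoin (Set.mem_insert _ _)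
      · exact Algebra.subset_adjoin (Set.mem_insert_of_mem _ (Set.mem_insert _ _))
      · rw [hx₂', div_eq_mul_inv]
        refine mul_mem ?_ (Algebra.subset_adjoin (by simp))
        refine Algebra.adjoin_mono ?_ (toAmbient_mem_adjoin_uv F₂)
        intro z hz
        simp only [Set.mem_insert_iff, Set.mem_singleton_iff] at hz ⊢
        tauto
    · apply Algebra.adjoin_mono
      intro z hz
      simp only [Set.mem_insert_iff, Set.mem_singleton_iff] at hz ⊢
      tauto
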